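/- For each j = 1,…,d−1, the Toeplitz operators on H²_anti satisfy T_{s_j}^* T_p = T_{s_{d−j}}. -/

import Mathlib

open MeasureTheory Complex ContinuousLinearMap
open scoped ENNReal

noncomputable section

namespace SymPoly

/-- The `i`-th elementary symmetric polynomial of an `n`-tuple of complex numbers. -/
def esymC (n i : ℕ) (w : Fin n → ℂ) : ℂ :=
  ∑ S ∈ Finset.univ.powersetCard i, ∏ k ∈ S, w k

variable (d : ℕ)

/-- The `d`-torus, parametrized additively; the normalized Haar measure is `volume`. -/
abbrev Pt := Fin d → AddCircle (1 : ℝ)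

/-- The coordinates of a point of the `d`-torus, as complex numbers of modulus one. -/
def zv (θ : Pt d) : Fin d → ℂ := fun k => (AddCircle.toCircle (θ k) : ℂ)

/-- The monomial `z ^ m` (with `m : Fin d → ℤ`) on the `d`-torus. -/
def monom (m : Fin d → ℤ) (θ : Pt d) : ℂ :=
  ((∏ k, (AddCircle.toCircle (θ k)) ^ (m k) : Circle) : ℂ)

/-- The antisymmetrized monomial `a_m = ∑_σ sgn σ • z ^ (m ∘ σ)`. -/
def aFun (m : Fin d → ℤ) (θ : Pt d) : ℂ :=
  ∑ σ : Equiv.Perm (Fin d), ((Equiv.Perm.sign σ : ℤ) : ℂ) * monom d (m ∘ σ) θ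

/-- `L²` of the `d`-torus with normalized Haar measure. -/
abbrev L2 := Lp ℂ 2 (volume : Measure (Pt d))

lemma continuous_monom (m : Fin d → ℤ) : Continuous (monom d m) := by
  have h1 : Continuous fun θ : Pt d => (∏ k, (AddCircle.toCircle (θ k)) ^ (m k) : Circle) := by
    apply continuous_finset_prod
    intro k _
    exact (continuous_zpow (m k)).comp (AddCircle.continuous_toCircle.comp (continuous_apply k))
  have h2 : Continuous ((↑) : Circle → ℂ) := continuous_subtype_val
  exact h2.comp h1

lemma continuous_aFun (m : Fin d → ℤ) : Continuous (aFun d m) :=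
  continuous_finset_sum _ fun σ _ => continuous_const.mul (continuous_monom d (m ∘ σ))

lemma memℒp_top_of_continuous {f : Pt d → ℂ} (hf : Continuous f) :
    MemLp f ⊤ (volume : Measure (Pt d)) :=
  hf.memLp_top_of_hasCompactSupport
    (IsCompact.of_isClosed_subset isCompact_univ (isClosed_tsupport f) (Set.subset_univ _)) _

lemma memℒp_aFun (m : Fin d → ℤ) : MemLp (aFun d m) 2 volume :=
  (memℒp_top_of_continuous d (continuous_aFun d m)).mono_exponent le_top

/-- `a_m` as an element of `L²`. -/
def aLp (m : Fin d → ℤ) : L2 d := (memℒp_aFun d m).toLp _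

/-- The action of a permutation on points of the torus. -/
def permAct (σ : Equiv.Perm (Fin d)) (θ : Pt d) : Pt d := fun k => θ (σ k)

lemma measurePreserving_permAct (σ : Equiv.Perm (Fin d)) :
    MeasurePreserving (permAct d σ) volume volume := by
  have h := MeasureTheory.volume_measurePreserving_piCongrLeft
    (fun _ : Fin d => AddCircle (1 : ℝ)) σ.symm
  have heq : permAct d σ =
      ⇑(MeasurableEquiv.piCongrLeft (fun _ : Fin d => AddCircle (1 : ℝ)) σ.symm) := by
    funext θ k
    conv_rhs => rw [show k = σ.symm (σ k) by simp]
    rw [MeasurableEquiv.piCongrLeft_apply_apply]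
    rfl
  rw [heq]
  exact h

/-- Composition with a permutation of the coordinates, as a linear isometry of `L²`. -/
def compPerm (σ : Equiv.Perm (Fin d)) : L2 d →ₗᵢ[ℂ] L2 d :=
  Lp.compMeasurePreservingₗᵢ ℂ (permAct d σ) (measurePreserving_permAct d σ)

/-- The antisymmetric part of `L²` of the torus, i.e. those `f` with
`f (z_σ) = sgn σ • f z` almost everywhere, for every permutation `σ`. -/
def L2anti : Submodule ℂ (L2 d) where
  carrier := {f | ∀ σ : Equiv.Perm (Fin d),
    compPerm d σ f = (((Equiv.Perm.sign σ : ℤ) : ℂ)) • f}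
  add_mem' := by
    intro f g hf hg σ
    simp only [LinearIsometry.map_add, hf σ, hg σ, smul_add]
  zero_mem' := by
    intro σ
    simp only [LinearIsometry.map_zero, smul_zero]
  smul_mem' := by
    intro c f hf σ
    simp only [LinearIsometry.map_smul, hf σ]
    rw [smul_comm]

lemma isClosed_L2anti : IsClosed (L2anti d : Set (L2 d)) := by
  have : (L2anti d : Set (L2 d)) = ⋂ σ : Equiv.Perm (Fin d),
      {f | compPerm d σ f = (((Equiv.Perm.sign σ : ℤ) : ℂ)) • f} := by
    ext f
    simp only [Set.mem_iInter]
    rfl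
  rw [this]
  exact isClosed_iInter fun σ =>
    isClosed_eq (compPerm d σ).continuous (continuous_const_smul _)

/-- The (boundary-value model of the) Hardy space of the symmetrized polydisk:
the closed span of the antisymmetrized monomials `a_m` with `m` strictly decreasing
and nonnegative. -/
def H2 : Submodule ℂ (L2 d) :=
  (Submodule.span ℂ
    {f : L2 d | ∃ m : Fin d → ℤ, StrictAnti m ∧ (∀ k, 0 ≤ m k) ∧ f = aLp d m}).topologicalClosure

instance : CompleteSpace (H2 d) := by unfold H2; infer_instance

instance : Submodule.HasOrthogonalProjection (H2 d) := by unfold H2; infer_instance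

/-- Multiplication by an essentially bounded function, as a continuous linear operator
on an `L²`-space. -/
def mulCLM {α : Type} [MeasurableSpace α] (μ : Measure α) (φ : α → ℂ)
    (hφ : MemLp φ ⊤ μ) : Lp ℂ 2 μ →L[ℂ] Lp ℂ 2 μ :=
  LinearMap.mkContinuous
    { toFun := fun f => MemLp.toLp (φ • ⇑f) ((Lp.memLp f).smul (r := 2) hφ)
      map_add' := fun f g => by
        rw [← MemLp.toLp_add]
        apply MemLp.toLp_congr
        filter_upwards [Lp.coeFn_add f g] with x hx
        simp only [Pi.smul_apply, Pi.mul_apply, Pi.add_apply, hx, smul_eq_mul, mul_add]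
      map_smul' := fun c f => by
        simp only [RingHom.id_apply]
        rw [← MemLp.toLp_const_smul c ((Lp.memLp f).smul (r := 2) hφ)]
        apply MemLp.toLp_congr
        filter_upwards [Lp.coeFn_smul c f] with x hx
        simp only [Pi.smul_apply, Pi.mul_apply, hx, smul_eq_mul]
        ring }
    (eLpNorm φ ⊤ μ).toReal
    (fun f => by
      simp only [LinearMap.coe_mk, AddHom.coe_mk]
      rw [Lp.norm_toLp]
      have h := eLpNorm_smul_le_eLpNorm_top_mul_eLpNorm 2 (Lp.aestronglyMeasurable f) φ
      calc (eLpNorm (φ • ⇑f) 2 μ).toReal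
          ≤ (eLpNorm φ ⊤ μ * eLpNorm (⇑f) 2 μ).toReal := by
            apply ENNReal.toReal_mono _ h
            exact ENNReal.mul_ne_top hφ.2.ne (Lp.memLp f).2.ne
        _ = (eLpNorm φ ⊤ μ).toReal * ‖f‖ := by
            rw [ENNReal.toReal_mul, Lp.norm_def])

lemma mulCLM_coeFn {α : Type} [MeasurableSpace α] (μ : Measure α) (φ : α → ℂ)
    (hφ : MemLp φ ⊤ μ) (f : Lp ℂ 2 μ) :
    ⇑(mulCLM μ φ hφ f) =ᵐ[μ] fun x => φ x * f x := by
  have h : ⇑(mulCLM μ φ hφ f) =ᵐ[μ] φ • ⇑f :=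
    MemLp.coeFn_toLp ((Lp.memLp f).smul (r := 2) hφ)
  filter_upwards [h] with x hx
  simpa [Pi.smul_apply, smul_eq_mul] using hx

/-- A function on the torus is symmetric if it is invariant, a.e., under every
permutation of the coordinates. -/
def IsSymm (φ : Pt d → ℂ) : Prop :=
  ∀ σ : Equiv.Perm (Fin d), (fun θ => φ (permAct d σ θ)) =ᵐ[volume] φ

/-- The Toeplitz operator with (essentially bounded) symbol `φ`:
compress multiplication by `φ` to the Hardy space. -/
def toep (φ : Pt d → ℂ) (hφ : MemLp φ ⊤ volume) : H2 d →L[ℂ] H2 d :=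
  (Submodule.orthogonalProjectionOnto (H2 d)) ∘L ((mulCLM volume φ hφ) ∘L (H2 d).subtypeL)

/-- `T` is a Toeplitz operator if it is `T_φ` for some essentially bounded symmetric
symbol `φ`. -/
def IsToeplitz (T : H2 d →L[ℂ] H2 d) : Prop :=
  ∃ (φ : Pt d → ℂ) (hφ : MemLp φ ⊤ volume), IsSymm d φ ∧ T = toep d φ hφ

/-- The elementary symmetric polynomials as functions on the torus. -/
def sFun (i : ℕ) : Pt d → ℂ := fun θ => esymC d i (zv d θ)

lemma continuous_sFun (i : ℕ) : Continuous (sFun d i) := by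
  unfold sFun esymC
  apply continuous_finset_sum
  intro S _
  apply continuous_finset_prod
  intro k _
  have h2 : Continuous ((↑) : Circle → ℂ) := continuous_subtype_val
  exact h2.comp (AddCircle.continuous_toCircle.comp (continuous_apply k))

lemma sMem (i : ℕ) : MemLp (sFun d i) ⊤ volume :=
  memℒp_top_of_continuous d (continuous_sFun d i)

/-- The Toeplitz operators `T_{s_i}` with elementary symmetric polynomial symbols;
`Ts d d` is `T_p`. -/
def Ts (i : ℕ) : H2 d →L[ℂ] H2 d := toep d (sFun d i) (sMem d i)

lemma aLp_mem_H2 (m : Fin d → ℤ) (h1 : StrictAnti m) (h2 : ∀ k, 0 ≤ m k) :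
    aLp d m ∈ H2 d :=
  Submodule.le_topologicalClosure _ (Submodule.subset_span ⟨m, h1, h2, rfl⟩)

open scoped Classical in
/-- `a_m` as an element of the Hardy space (junk value `0` if `m` is not a
strictly decreasing nonnegative tuple). -/
def aH (m : Fin d → ℤ) : H2 d :=
  if h : StrictAnti m ∧ ∀ k, 0 ≤ m k then ⟨aLp d m, aLp_mem_H2 d m h.1 h.2⟩ else 0

/-- The tuple with `1` in the first `j` coordinates and `0` elsewhere. -/
def fj (j : ℕ) : Fin d → ℤ := fun k => if (k : ℕ) < j then 1 else 0



lemma monom_eq (m : Fin d → ℤ) (θ : Pt d) :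
    monom d m θ = ∏ k, (AddCircle.toCircle (θ k) : ℂ) ^ (m k) := by
  unfold monom
  rw [show ((↑) : Circle → ℂ) = (Circle.coeHom : Circle →* ℂ) from rfl, map_prod]
  exact Finset.prod_congr rfl fun k _ => map_zpow _ _ _

lemma sFun_d_eq (θ : Pt d) :
    sFun d d θ = ∏ k, (AddCircle.toCircle (θ k) : ℂ) := by
  unfold sFun esymC
  have hc : (Finset.univ : Finset (Fin d)).card = d := by simp
  have hp := Finset.powersetCard_self (Finset.univ : Finset (Fin d))
  rw [hc] at hp
  rw [hp, Finset.sum_singleton]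
  rfl

lemma sFun_d_mul_monom (m : Fin d → ℤ) (θ : Pt d) :
    sFun d d θ * monom d m θ = monom d (fun k => m k + 1) θ := by
  rw [monom_eq, monom_eq, sFun_d_eq, ← Finset.prod_mul_distrib]
  refine Finset.prod_congr rfl fun k _ => ?_
  rw [zpow_add₀ (Circle.coe_ne_zero _), zpow_one, mul_comm]

lemma sFun_d_mul_aFun (m : Fin d → ℤ) (θ : Pt d) :
    sFun d d θ * aFun d m θ = aFun d (fun k => m k + 1) θ := by
  unfold aFun
  rw [Finset.mul_sum]
  refine Finset.sum_congr rfl fun σ _ => ?_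
  rw [← mul_assoc, mul_comm (sFun d d θ), mul_assoc, sFun_d_mul_monom]
  rfl

lemma aLp_coeFn (m : Fin d → ℤ) : ⇑(aLp d m) =ᵐ[volume] aFun d m :=
  (memℒp_aFun d m).coeFn_toLp

lemma mulp_aLp (m : Fin d → ℤ) :
    mulCLM volume (sFun d d) (sMem d d) (aLp d m) = aLp d (fun k => m k + 1) := by
  apply Lp.ext
  filter_upwards [mulCLM_coeFn volume (sFun d d) (sMem d d) (aLp d m),
    aLp_coeFn d m, aLp_coeFn d (fun k => m k + 1)] with θ h1 h2 h3
  rw [h1, h3, h2, sFun_d_mul_aFun]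

lemma mulp_mem_H2 {f : L2 d} (hf : f ∈ H2 d) :
    mulCLM volume (sFun d d) (sMem d d) f ∈ H2 d := by
  revert f
  have : H2 d ≤ (H2 d).comap
      ((mulCLM volume (sFun d d) (sMem d d)) : L2 d →ₗ[ℂ] L2 d) := by
    apply Submodule.topologicalClosure_minimal
    · rw [Submodule.span_le]
      rintro f ⟨m, hm1, hm2, rfl⟩
      refine Submodule.mem_comap.mpr ?_
      show mulCLM volume (sFun d d) (sMem d d) (aLp d m) ∈ H2 d
      rw [mulp_aLp]
      exact aLp_mem_H2 d _ (fun a b hab => by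
        have := hm1 hab; omega) (fun k => by have := hm2 k; omega)
    · exact (isClosed_closure.preimage
        (mulCLM volume (sFun d d) (sMem d d)).continuous)
  exact fun f hf => this hf

lemma Tp_apply (f : H2 d) :
    (Ts d d f : L2 d) = mulCLM volume (sFun d d) (sMem d d) (f : L2 d) := by
  unfold Ts toep
  rw [ContinuousLinearMap.comp_apply, ContinuousLinearMap.comp_apply,
    Submodule.subtypeL_apply]
  exact Submodule.starProjection_eq_self_iff.mpr (mulp_mem_H2 d f.2)


lemma conj_sFun_mul (j : ℕ) (hj : j ≤ d) (θ : Pt d) :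
    (starRingEnd ℂ) (sFun d d θ) * sFun d j θ = (starRingEnd ℂ) (sFun d (d - j) θ) := by
  set z : Fin d → ℂ := fun k => (AddCircle.toCircle (θ k) : ℂ) with hz
  have hz0 : ∀ k, z k ≠ 0 := fun k => Circle.coe_ne_zero _
  have hconj : ∀ k, (starRingEnd ℂ) (z k) = (z k)⁻¹ := fun k => by
    rw [← Circle.coe_inv_eq_conj, Circle.coe_inv]
  have hsf : ∀ i, sFun d i θ = ∑ S ∈ Finset.univ.powersetCard i, ∏ k ∈ S, z k :=
    fun i => rfl
  have hdd : sFun d d θ = ∏ k, z k := sFun_d_eq d θ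
  rw [hdd, hsf j, hsf (d - j), map_sum, map_prod, Finset.mul_sum]
  simp only [map_prod, hconj]
  refine Finset.sum_nbij' (fun T => Tᶜ) (fun S => Sᶜ) ?_ ?_ ?_ ?_ ?_
  · intro T hT
    simp only [Finset.mem_powersetCard_univ, Finset.card_compl, Fintype.card_fin] at *
    omega
  · intro S hS
    simp only [Finset.mem_powersetCard_univ, Finset.card_compl, Fintype.card_fin] at *
    omega
  · intro T _; exact compl_compl T
  · intro S _; exact compl_compl S
  · intro T _
    have hT1 : (∏ k ∈ T, (z k)⁻¹) * ∏ k ∈ T, z k = 1 := by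
      rw [← Finset.prod_mul_distrib]
      exact Finset.prod_eq_one fun k _ => inv_mul_cancel₀ (hz0 k)
    calc (∏ k, (z k)⁻¹) * ∏ k ∈ T, z k
        = ((∏ k ∈ T, (z k)⁻¹) * ∏ k ∈ Tᶜ, (z k)⁻¹) * ∏ k ∈ T, z k := by
          rw [Finset.prod_mul_prod_compl]
      _ = ∏ k ∈ Tᶜ, (z k)⁻¹ := by rw [mul_right_comm, hT1, one_mul]

lemma key_inner (j : ℕ) (hj : j ≤ d) (u v : L2 d) :
    (inner ℂ (mulCLM volume (sFun d d) (sMem d d) u)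
      (mulCLM volume (sFun d j) (sMem d j) v) : ℂ)
      = inner ℂ (mulCLM volume (sFun d (d - j)) (sMem d (d - j)) u) v := by
  rw [MeasureTheory.L2.inner_def, MeasureTheory.L2.inner_def]
  apply integral_congr_ae
  filter_upwards [mulCLM_coeFn volume (sFun d d) (sMem d d) u,
    mulCLM_coeFn volume (sFun d j) (sMem d j) v,
    mulCLM_coeFn volume (sFun d (d - j)) (sMem d (d - j)) u] with θ h1 h2 h3
  rw [h1, h2, h3, RCLike.inner_apply, RCLike.inner_apply, map_mul, map_mul,
    ← conj_sFun_mul d j hj θ]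
  ring

/-- **Lemma 3.3, second part**: the Toeplitz operators with elementary symmetric
polynomial symbols satisfy `T_{s_j}^* T_p = T_{s_{d-j}}` for `1 ≤ j ≤ d - 1`. -/
theorem stmt17 (d : ℕ) (hd : 2 ≤ d) :
    ∀ j, 1 ≤ j → j ≤ d - 1 → adjoint (Ts d j) * Ts d d = Ts d (d - j) := by
  intro j hj1 hj2
  have hjd : j ≤ d := le_trans hj2 (Nat.sub_le d 1)
  refine ContinuousLinearMap.ext fun f => ?_
  refine ext_inner_right ℂ fun g => ?_
  rw [ContinuousLinearMap.mul_apply, ContinuousLinearMap.adjoint_inner_left]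
  show (inner ℂ (Ts d d f) ((toep d (sFun d j) (sMem d j)) g) : ℂ)
    = inner ℂ ((toep d (sFun d (d - j)) (sMem d (d - j))) f) g
  unfold toep
  rw [ContinuousLinearMap.comp_apply, ContinuousLinearMap.comp_apply,
    ContinuousLinearMap.comp_apply, ContinuousLinearMap.comp_apply,
    Submodule.subtypeL_apply, Submodule.subtypeL_apply,
    Submodule.inner_orthogonalProjectionOnto_eq_of_mem_left,
    Submodule.inner_orthogonalProjectionOnto_eq_of_mem_right,
    Tp_apply, key_inner d j hjd]

end SymPoly
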